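/- Let r ≥ 1 and suppose (a_1,...,a_r) is an extreme point of the convex set 𝒜_r* with a_1 ≤ a_2 ≤ ⋯ ≤ a_r. Then a_1 < a_2 < ⋯ < a_r (the coordinates are strictly increasing). -/

import Mathlib

/-- `𝒜_r*` : the set of a ∈ ℝ^r with Σ a_j = r(r+1)/2 and Σ_{j∈E} a_j ≥ |E|(|E|+1)/2
for every subset E of the index set. -/
def Astar (r : ℕ) : Set (Fin r → ℝ) :=
  {a : Fin r → ℝ |
    (∑ j, a j) = (r : ℝ) * ((r : ℝ) + 1) / 2 ∧
    ∀ E : Finset (Fin r), (E.card : ℝ) * ((E.card : ℝ) + 1) / 2 ≤ ∑ j ∈ E, a j}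

lemma astar_strict_slack {r : ℕ} {a : Fin r → ℝ} (ha : a ∈ Astar r)
    {p q : Fin r} (hpq : p ≠ q) (heq : a p = a q)
    {E : Finset (Fin r)} (hp : p ∈ E) (hq : q ∉ E) :
    (E.card : ℝ) * ((E.card : ℝ) + 1) / 2 < ∑ j ∈ E, a j := by
  have h1 := ha.2 (insert q E)
  have h2 := ha.2 (E.erase p)
  have hc1 : (insert q E).card = E.card + 1 := Finset.card_insert_of_notMem hq
  have hc2 : (E.erase p).card = E.card - 1 := Finset.card_erase_of_mem hp
  have hE1 : 1 ≤ E.card := Finset.card_pos.mpr ⟨p, hp⟩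
  have hs1 : ∑ j ∈ insert q E, a j = a q + ∑ j ∈ E, a j := Finset.sum_insert hq
  have hs2 : ∑ j ∈ E.erase p, a j + a p = ∑ j ∈ E, a j := Finset.sum_erase_add E a hp
  rw [hc1, hs1] at h1
  rw [hc2] at h2
  have hcast : ((E.card - 1 : ℕ) : ℝ) = (E.card : ℝ) - 1 := by
    push_cast [Nat.cast_sub hE1]; ring
  rw [hcast] at h2
  push_cast at h1
  nlinarith [h1, h2, hs2, heq]

/-- if (a_1,...,a_r) is an extreme point of 𝒜_r* with nondecreasing
coordinates, then its coordinates are strictly increasing. -/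
theorem stmt_10 (r : ℕ) (hr : 1 ≤ r) (a : Fin r → ℝ)
    (hmono : Monotone a)
    (ha : a ∈ Set.extremePoints ℝ (Astar r)) :
    StrictMono a := by
  have hinj : Function.Injective a := by
    intro p q heq
    by_contra hpq
    -- the perturbation direction
    set v : Fin r → ℝ := fun j => (if j = p then (1:ℝ) else 0) + (if j = q then (-1:ℝ) else 0)
      with hv
    have hsumv : ∀ E : Finset (Fin r), ∑ j ∈ E, v j
        = (if p ∈ E then (1:ℝ) else 0) + (if q ∈ E then (-1:ℝ) else 0) := by
      intro E
      simp [hv, Finset.sum_add_distrib, Finset.sum_ite_eq' E]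
    -- the finite family of constraints affected by the perturbation
    set s : Finset (Finset (Fin r)) :=
      Finset.univ.powerset.filter (fun E => (p ∈ E ∧ q ∉ E) ∨ (q ∈ E ∧ p ∉ E)) with hs
    have hmem : ∀ E ∈ s, (p ∈ E ∧ q ∉ E) ∨ (q ∈ E ∧ p ∉ E) := by
      intro E hE
      exact (Finset.mem_filter.mp hE).2
    have hsne : s.Nonempty := by
      refine ⟨{p}, Finset.mem_filter.mpr ⟨Finset.mem_powerset.mpr (Finset.subset_univ _), ?_⟩⟩
      exact Or.inl ⟨Finset.mem_singleton_self p, by simp [Ne.symm hpq]⟩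
    obtain ⟨E0, hE0s, hE0min⟩ := s.exists_min_image
      (fun E => ∑ j ∈ E, a j - (E.card : ℝ) * ((E.card : ℝ) + 1) / 2) hsne
    set ε : ℝ := ∑ j ∈ E0, a j - (E0.card : ℝ) * ((E0.card : ℝ) + 1) / 2 with hε
    clear_value ε
    have hεpos : 0 < ε := by
      rcases hmem E0 hE0s with ⟨h1, h2⟩ | ⟨h1, h2⟩
      · have := astar_strict_slack ha.1 hpq heq h1 h2
        rw [hε]; linarith
      · have := astar_strict_slack ha.1 (Ne.symm hpq) heq.symm h1 h2
        rw [hε]; linarith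
    -- slack bound for all affected constraints
    have hslack : ∀ E : Finset (Fin r), (p ∈ E ∧ q ∉ E) ∨ (q ∈ E ∧ p ∉ E) →
        (E.card : ℝ) * ((E.card : ℝ) + 1) / 2 + ε ≤ ∑ j ∈ E, a j := by
      intro E hE
      have hEs : E ∈ s := Finset.mem_filter.mpr ⟨Finset.mem_powerset.mpr (Finset.subset_univ _), hE⟩
      have := hE0min E hEs
      linarith
    -- the two perturbed points
    have hmemAstar : ∀ t : ℝ, t = 1 ∨ t = -1 →
        (fun j => a j + (t * ε) * v j) ∈ Astar r := by
      intro t ht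
      constructor
      · have : ∑ j, (a j + (t * ε) * v j) = ∑ j, a j + (t * ε) * ∑ j, v j := by
          rw [Finset.mul_sum, ← Finset.sum_add_distrib]
        rw [this, hsumv]
        simp [ha.1.1]
      · intro E
        have hsplit : ∑ j ∈ E, (a j + (t * ε) * v j)
            = ∑ j ∈ E, a j + (t * ε) * ∑ j ∈ E, v j := by
          rw [Finset.mul_sum, ← Finset.sum_add_distrib]
        rw [hsplit, hsumv]
        by_cases hpE : p ∈ E <;> by_cases hqE : q ∈ E
        · have h0 : ((if p ∈ E then (1:ℝ) else 0) + if q ∈ E then (-1:ℝ) else 0) = 0 := by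
            simp [hpE, hqE]
          rw [h0, mul_zero, add_zero]; exact ha.1.2 E
        · have := hslack E (Or.inl ⟨hpE, hqE⟩)
          rcases ht with ht | ht <;> simp [hpE, hqE, ht] <;>
            linarith [this, hεpos, ha.1.2 E]
        · have := hslack E (Or.inr ⟨hqE, hpE⟩)
          rcases ht with ht | ht <;> simp [hpE, hqE, ht] <;>
            linarith [this, hεpos, ha.1.2 E]
        · simpa [hpE, hqE] using ha.1.2 E
    have hb := hmemAstar 1 (Or.inl rfl)
    have hc := hmemAstar (-1) (Or.inr rfl)
    have hseg : a ∈ openSegment ℝ (fun j => a j + (1 * ε) * v j)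
        (fun j => a j + ((-1) * ε) * v j) := by
      refine ⟨1/2, 1/2, by norm_num, by norm_num, by norm_num, ?_⟩
      funext j
      simp only [Pi.add_apply, Pi.smul_apply, smul_eq_mul]
      ring
    have := (ha.2 hb hc hseg)
    have hbp : a p + (1 * ε) * v p = a p := by
      exact congrFun this p
    have hvp : v p = 1 := by simp [hv, hpq]
    rw [hvp] at hbp
    linarith
  exact hmono.strictMono_of_injective hinj
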